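/- For any real n-vectors y and z, ½‖(y+z)₊‖² − ½‖y₊‖² − zᵀy₊ = ½ Σ_{j=1}^{n} d_j z_j², where for each j, d_j = ∫₀¹ ( ∫₀¹ σ(y_j + s t z_j) ds ) 2t dt and σ(ξ) = 1 if ξ > 0, σ(ξ) = 0 if ξ ≤ 0. -/

import Mathlib

open Matrix

/-- `σ(ξ) = 1` if `ξ > 0` and `0` if `ξ ≤ 0`. -/
noncomputable def posSign (ξ : ℝ) : ℝ := if 0 < ξ then 1 else 0

lemma measurable_posSign : Measurable posSign := by
  unfold posSign
  exact Measurable.ite (measurableSet_lt measurable_const measurable_id)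
    measurable_const measurable_const

lemma hasDerivAt_maxsq (x : ℝ) :
    HasDerivAt (fun u : ℝ => (max 0 u)^2) (2 * max 0 x) x := by
  rcases lt_trichotomy x 0 with hx | hx | hx
  · have h0 : max 0 x = 0 := max_eq_left hx.le
    rw [h0, mul_zero]
    have : (fun u : ℝ => (max 0 u)^2) =ᶠ[nhds x] fun _ => 0 := by
      filter_upwards [eventually_lt_nhds hx] with u hu
      simp [max_eq_left hu.le]
    exact (hasDerivAt_const x 0).congr_of_eventuallyEq this
  · subst hx
    rw [max_self, mul_zero]
    rw [hasDerivAt_iff_isLittleO]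
    rw [Asymptotics.isLittleO_iff]
    intro ε hε
    filter_upwards [Metric.ball_mem_nhds (0:ℝ) hε] with u hu
    simp only [Metric.mem_ball, Real.dist_eq, sub_zero] at hu
    have h1 : ‖(max 0 u)^2 - (max 0 (0:ℝ))^2 - (u - 0) • (0:ℝ)‖ ≤ |u| * |u| := by
      have e1 : ‖(max 0 u)^2 - (max 0 (0:ℝ))^2 - (u - 0) • (0:ℝ)‖ = (max 0 u)^2 := by
        simp only [max_self, smul_zero, sub_zero]
        norm_num
      rw [e1]
      rcases le_total u 0 with h | h
      · rw [max_eq_left h]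
        norm_num
        exact mul_self_nonneg u
      · rw [max_eq_right h, ← sq_abs u, sq]
    calc ‖(max 0 u)^2 - (max 0 (0:ℝ))^2 - (u - 0) • (0:ℝ)‖ ≤ |u| * |u| := h1
      _ ≤ ε * ‖u - 0‖ := by
          rw [sub_zero]
          exact mul_le_mul_of_nonneg_right hu.le (abs_nonneg u)
  · have h0 : max 0 x = x := max_eq_right hx.le
    rw [h0]
    have : (fun u : ℝ => (max 0 u)^2) =ᶠ[nhds x] fun u => u^2 := by
      filter_upwards [eventually_gt_nhds hx] with u hu
      simp [max_eq_right hu.le]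
    have hp : HasDerivAt (fun u : ℝ => u^2) (2 * x) x := by
      simpa using hasDerivAt_pow 2 x
    exact hp.congr_of_eventuallyEq this

lemma integral_posSign (a c : ℝ) (hc : c ≠ 0) :
    ∫ s in (0:ℝ)..1, posSign (a + s * c) = (max 0 (a + c) - max 0 a) / c := by
  set g' : ℝ → ℝ := fun s => if a + s * c = 0 then max 0 c else c * posSign (a + s * c)
    with hg'
  have haff : ∀ x : ℝ, HasDerivAt (fun s : ℝ => a + s * c) c x := fun x => by
    simpa using ((hasDerivAt_id x).mul_const c).const_add a
  have hcont : ContinuousOn (fun s : ℝ => max 0 (a + s * c)) (Set.Icc 0 1) :=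
    (continuous_const.max (by continuity)).continuousOn
  have hderiv : ∀ x ∈ Set.Ioo (0:ℝ) 1,
      HasDerivWithinAt (fun s : ℝ => max 0 (a + s * c)) (g' x) (Set.Ioi x) x := by
    intro x _
    rcases lt_trichotomy (a + x * c) 0 with h | h | h
    · have hg : g' x = 0 := by
        rw [hg']; simp [h.ne, posSign, not_lt.2 h.le]
      rw [hg]
      have hopen : IsOpen {s : ℝ | a + s * c < 0} :=
        isOpen_lt (by continuity) continuous_const
      have hev : (fun s : ℝ => max 0 (a + s * c)) =ᶠ[nhds x] fun _ => 0 := by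
        filter_upwards [hopen.mem_nhds h] with u hu
        simp [max_eq_left (le_of_lt hu)]
      exact ((hasDerivAt_const x 0).congr_of_eventuallyEq hev).hasDerivWithinAt
    · have hg : g' x = max 0 c := by rw [hg']; simp [h]
      rw [hg]
      have hlin : ∀ s : ℝ, a + s * c = (s - x) * c := by
        intro s; have := h; ring_nf; linarith [h, (by ring : (s - x) * c = s * c - x * c)]
      rcases hc.lt_or_gt with hneg | hpos
      · have hmax : max 0 c = 0 := max_eq_left hneg.le
        rw [hmax]
        apply (hasDerivWithinAt_const x (Set.Ioi x) (0:ℝ)).congr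
        · intro y hy
          have : a + y * c ≤ 0 := by
            rw [hlin y]
            exact mul_nonpos_of_nonneg_of_nonpos (by linarith [Set.mem_Ioi.mp hy]) hneg.le
          simp [max_eq_left this]
        · simp [max_eq_left h.le]
      · have hmax : max 0 c = c := max_eq_right hpos.le
        rw [hmax]
        apply ((haff x).hasDerivWithinAt).congr
        · intro y hy
          have : 0 ≤ a + y * c := by
            rw [hlin y]
            exact mul_nonneg (by linarith [Set.mem_Ioi.mp hy]) hpos.le
          simp [max_eq_right this]
        · simp [max_eq_left h.le, h]
    · have hg : g' x = c := by
        rw [hg']; simp [ne_of_gt h, posSign, h]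
      rw [hg]
      have hopen : IsOpen {s : ℝ | 0 < a + s * c} :=
        isOpen_lt continuous_const (by continuity)
      have hev : (fun s : ℝ => max 0 (a + s * c)) =ᶠ[nhds x] fun s => a + s * c := by
        filter_upwards [hopen.mem_nhds h] with u hu
        simp [max_eq_right (le_of_lt hu)]
      exact ((haff x).congr_of_eventuallyEq hev).hasDerivWithinAt
  have hm : Measurable g' := by
    apply Measurable.ite (measurableSet_eq_fun (by fun_prop) measurable_const)
      measurable_const
    exact measurable_const.mul (measurable_posSign.comp (by fun_prop))
  have hbound : ∀ s : ℝ, ‖g' s‖ ≤ |c| := by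
    intro s
    rw [hg']
    by_cases h : a + s * c = 0
    · simp only [h, if_pos]
      rcases le_total c 0 with h1 | h1
      · simp [max_eq_left h1]
      · simp [max_eq_right h1, abs_of_nonneg h1, le_abs_self]
    · simp only [h, if_neg, not_false_eq_true]
      rw [Real.norm_eq_abs, abs_mul]
      unfold posSign
      split <;> simp [abs_nonneg]
  have hint : IntervalIntegrable g' MeasureTheory.volume 0 1 := by
    rw [intervalIntegrable_iff]
    exact MeasureTheory.Integrable.mono' (MeasureTheory.integrableOn_const
        (by simp [Set.uIoc_of_le (zero_le_one (α := ℝ))]))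
      hm.aestronglyMeasurable (MeasureTheory.ae_of_all _ hbound)
  have key := intervalIntegral.integral_eq_sub_of_hasDeriv_right_of_le zero_le_one
    hcont hderiv hint
  have hnull : MeasureTheory.volume {s : ℝ | a + s * c = 0} = 0 := by
    refine MeasureTheory.measure_mono_null ?_ (MeasureTheory.measure_singleton (-a / c))
    intro s hs
    have hs' : a + s * c = 0 := hs
    have : s = -a / c := by
      rw [eq_div_iff hc]; linarith
    simpa using this
  have hae : ∫ s in (0:ℝ)..1, g' s = ∫ s in (0:ℝ)..1, c * posSign (a + s * c) := by
    apply intervalIntegral.integral_congr_ae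
    have h2 : ∀ᵐ s : ℝ, a + s * c ≠ 0 := by
      rw [MeasureTheory.ae_iff]
      simpa using hnull
    filter_upwards [h2] with s hs _
    rw [hg']; simp [hs]
  have hfin : c * ∫ s in (0:ℝ)..1, posSign (a + s * c) = max 0 (a + c) - max 0 a := by
    rw [← intervalIntegral.integral_const_mul, ← hae, key]
    norm_num
  rw [eq_div_iff hc, mul_comm]
  exact hfin

lemma scalar_key (a b : ℝ) :
    (∫ t in (0:ℝ)..1, (∫ s in (0:ℝ)..1, posSign (a + s * (t * b))) * (2 * t)) * b^2
      = (max 0 (a + b))^2 - (max 0 a)^2 - 2 * b * (max 0 a) := by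
  by_cases hb : b = 0
  · subst hb; simp
  · have hcongr : (∫ t in (0:ℝ)..1, (∫ s in (0:ℝ)..1, posSign (a + s * (t * b))) * (2 * t))
        = ∫ t in (0:ℝ)..1, (2 / b) * (max 0 (a + t * b) - max 0 a) := by
      apply intervalIntegral.integral_congr
      intro t ht
      rw [Set.uIcc_of_le zero_le_one] at ht
      rcases eq_or_lt_of_le ht.1 with h0 | h0
      · simp [← h0]
      · have ht0 : t ≠ 0 := ne_of_gt h0
        have htb : t * b ≠ 0 := mul_ne_zero ht0 hb
        simp only
        rw [integral_posSign a (t * b) htb]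
        field_simp
    have haff : ∀ t : ℝ, HasDerivAt (fun t : ℝ => a + t * b) b t := fun t => by
      simpa using ((hasDerivAt_id t).mul_const b).const_add a
    have hderiv : ∀ t ∈ Set.uIcc (0:ℝ) 1,
        HasDerivAt (fun t : ℝ => (2 / b) * ((max 0 (a + t * b))^2 / (2 * b) - max 0 a * t))
          ((2 / b) * (max 0 (a + t * b) - max 0 a)) t := by
      intro t _
      have h1 : HasDerivAt (fun t : ℝ => (max 0 (a + t * b))^2) (2 * max 0 (a + t * b) * b) t :=
        (hasDerivAt_maxsq (a + t * b)).comp (h := fun t : ℝ => a + t * b) t (haff t)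
      have h2 : HasDerivAt (fun t : ℝ => max 0 a * t) (max 0 a) t := by
        simpa using (hasDerivAt_id t).const_mul (max 0 a)
      have h3 := ((h1.div_const (2 * b)).sub h2).const_mul (2 / b)
      refine h3.congr_deriv ?_
      rw [mul_div_mul_right _ _ hb]
      ring
    have hintg : IntervalIntegrable
        (fun t : ℝ => (2 / b) * (max 0 (a + t * b) - max 0 a)) MeasureTheory.volume 0 1 := by
      apply Continuous.intervalIntegrable
      exact continuous_const.mul ((continuous_const.max (by continuity)).sub continuous_const)
    have key := intervalIntegral.integral_eq_sub_of_hasDerivAt hderiv hintg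
    rw [hcongr, key]
    have h1 : (1:ℝ) * b = b := one_mul b
    field_simp
    ring

/-- Lemma 2: vector Taylor expansion of `y ↦ ½‖y₊‖²` with diagonal integral remainder. -/
theorem taylor_pos_part_sq_vec {n : ℕ} (y z : Fin n → ℝ) (d : Fin n → ℝ)
    (hd : ∀ j, d j = ∫ t in (0:ℝ)..1,
        (∫ s in (0:ℝ)..1, posSign (y j + s * t * z j)) * (2 * t)) :
    (1/2) * (∑ j, (max 0 (y j + z j))^2) - (1/2) * (∑ j, (max 0 (y j))^2)
      - z ⬝ᵥ (fun j => max 0 (y j))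
      = (1/2) * ∑ j, d j * (z j)^2 := by
  have hj : ∀ j, d j * (z j)^2
      = (max 0 (y j + z j))^2 - (max 0 (y j))^2 - 2 * z j * (max 0 (y j)) := by
    intro j
    rw [hd j]
    simp_rw [mul_assoc]
    linear_combination scalar_key (y j) (z j)
  simp only [dotProduct, Finset.mul_sum, ← Finset.sum_sub_distrib]
  apply Finset.sum_congr rfl
  intro j _
  rw [hj j]
  ring
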